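/- The 2-particle configuration graph D^2(S̄_3) of the Y-graph (the star graph with 3 edges) is isomorphic as a simple graph to the cycle graph on 6 vertices. -/

import Mathlib

open Finset

/-- The star graph `S̄_3` (Y-graph) on `Fin 4`: the hub `0` is adjacent to each of
the leaves `1, 2, 3`, and there are no other edges. -/
def starGraph3 : SimpleGraph (Fin 4) where
  Adj v w := (v = 0 ∧ w ≠ 0) ∨ (w = 0 ∧ v ≠ 0)
  symm := by tauto
  loopless := by constructor; intro v h; tauto

/-- The 2-particle combinatorial configuration graph `D^2(S̄_3)`: vertices are the
`2`-element subsets of `Fin 4`, and `A` is adjacent to `B` iff their symmetric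
difference is `{0, k}` for some leaf `k`. -/
def configGraphY : SimpleGraph {A : Finset (Fin 4) // A.card = 2} where
  Adj A B := ∃ k : Fin 4, k ≠ 0 ∧ symmDiff A.1 B.1 = {0, k}
  symm := by
    constructor
    rintro A B ⟨k, hk, h⟩
    exact ⟨k, hk, by rwa [symmDiff_comm]⟩
  loopless := by
    constructor
    rintro A ⟨k, hk, h⟩
    rw [symmDiff_self] at h
    exact (Finset.insert_ne_empty 0 {k}) h.symm

def fwd : {A : Finset (Fin 4) // A.card = 2} → Fin 6 := fun A =>
  if A.1 = {0,1} then 0 else if A.1 = {1,2} then 1 else if A.1 = {0,2} then 2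
  else if A.1 = {2,3} then 3 else if A.1 = {0,3} then 4 else 5

def bwd : Fin 6 → {A : Finset (Fin 4) // A.card = 2} := fun i =>
  match i with
  | 0 => ⟨{0,1}, by decide⟩
  | 1 => ⟨{1,2}, by decide⟩
  | 2 => ⟨{0,2}, by decide⟩
  | 3 => ⟨{2,3}, by decide⟩
  | 4 => ⟨{0,3}, by decide⟩
  | 5 => ⟨{1,3}, by decide⟩

instance : DecidableRel configGraphY.Adj := fun _ _ =>
  Fintype.decidableExistsFintype

/-- `D^2(S̄_3)` is isomorphic to the cycle graph on 6 vertices. -/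
theorem configGraphY_iso_cycle6 :
    Nonempty (configGraphY ≃g SimpleGraph.cycleGraph 6) := by
  refine ⟨⟨⟨fwd, bwd, by decide, by decide⟩, @fun a b => ?_⟩⟩
  revert a b
  show ∀ a b, _
  decide
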